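/- Let $l_u, l_z, l_\theta, n_f \in \mathbb{N}$ be positive. For each $k \ge 0$ let $\Phi_k \in \mathbb{R}^{n_f l_u \times l_\theta}$, $\phi_k \in \mathbb{R}^{l_u \times l_\theta}$, $z_k \in \mathbb{R}^{l_z}$, $U_k \in \mathbb{R}^{n_f l_u}$ be given, let $N \in \mathbb{R}^{l_z \times n_f l_u}$, let $R_u \in \mathbb{R}^{l_u \times l_u}$ be symmetric positive semidefinite, set $\bar{R} = \mathrm{diag}(I_{l_z}, R_u)$, let $P_0 \in \mathbb{R}^{l_\theta \times l_\theta}$ be symmetric positive definite, and let $\theta_0 \in \mathbb{R}^{l_\theta}$. For $k \ge 0$ define the stacked matrix $A_k = [N\Phi_k ; \phi_k] \in \mathbb{R}^{(l_z + l_u) \times l_\theta}$, and define recursively $\Gamma_k = \bar{R} - \bar{R} A_k (P_k^{-1} + A_k^{\mathsf T} \bar{R} A_k)^{-1} A_k^{\mathsf T} \bar{R}$, $P_{k+1} = P_k - P_k A_k^{\mathsf T} \Gamma_k A_k P_k$, and $\theta_{k+1} = \theta_k - P_{k+1} A_k^{\mathsf T} \bar{R} \, [\, z_k - N(U_k - \Phi_k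 \theta_k) \, ; \, \phi_k \theta_k \,]$. Then for every $k \ge 0$: each $P_k$ is symmetric positive definite (so the recursion is well defined), and $\theta_{k+1}$ is the unique global minimizer over $\hat\theta \in \mathbb{R}^{l_\theta}$ of the cumulative cost $J_k(\hat\theta) = \sum_{i=0}^{k} \big[ \hat z_i(\hat\theta)^{\mathsf T} \hat z_i(\hat\theta) + (\phi_i \hat\theta)^{\mathsf T} R_u (\phi_i \hat\theta) \big] + (\hat\theta - \theta_0)^{\mathsf T} P_0^{-1} (\hat\theta - \theta_0)$, where $\hat z_i(\hat\theta) = z_i - N(U_i - \Phi_i \hat\theta)$. -/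

import Mathlib

open Matrix

section AuxRCAC

variable {n : Type*} [Fintype n]

private lemma rcac_swap {m : Type*} [Fintype m] (M : Matrix m n ℝ) (x : n → ℝ) (y : m → ℝ) :
    (M *ᵥ x) ⬝ᵥ y = x ⬝ᵥ (Mᵀ *ᵥ y) := by
  rw [Matrix.dotProduct_mulVec, Matrix.vecMul_transpose]

private lemma rcac_quad_exp (M : Matrix n n ℝ) (hM : Mᵀ = M) (u v : n → ℝ) :
    (u + v) ⬝ᵥ (M *ᵥ (u + v)) = u ⬝ᵥ (M *ᵥ u) + 2 * (u ⬝ᵥ (M *ᵥ v)) + v ⬝ᵥ (M *ᵥ v) := by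
  have h : v ⬝ᵥ (M *ᵥ u) = u ⬝ᵥ (M *ᵥ v) := by
    rw [dotProduct_comm, rcac_swap, hM]
  simp only [Matrix.mulVec_add, dotProduct_add, add_dotProduct, h]
  ring

private lemma rcac_quad_shift (M : Matrix n n ℝ) (hM : Mᵀ = M) (θs w x : n → ℝ)
    (hw : M *ᵥ θs = w) :
    x ⬝ᵥ (M *ᵥ x) - 2 * (x ⬝ᵥ w) =
      θs ⬝ᵥ (M *ᵥ θs) - 2 * (θs ⬝ᵥ w) + (x - θs) ⬝ᵥ (M *ᵥ (x - θs)) := by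
  have hx : x = θs + (x - θs) := by abel
  have h1 : θs ⬝ᵥ (M *ᵥ (x - θs)) = (x - θs) ⬝ᵥ w := by
    rw [dotProduct_comm, rcac_swap, hM, hw]
  calc x ⬝ᵥ (M *ᵥ x) - 2 * (x ⬝ᵥ w)
      = (θs + (x - θs)) ⬝ᵥ (M *ᵥ (θs + (x - θs))) - 2 * ((θs + (x - θs)) ⬝ᵥ w) := by rw [← hx]
    _ = _ := by rw [rcac_quad_exp M hM, add_dotProduct, h1]; ring

private lemma rcac_dot_sum {ι : Type*} (s : Finset ι) (f : ι → n → ℝ) (x : n → ℝ) :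
    x ⬝ᵥ (∑ i ∈ s, f i) = ∑ i ∈ s, x ⬝ᵥ f i := by
  classical
  induction s using Finset.induction_on with
  | empty => simp
  | insert _ _ h ih => simp [Finset.sum_insert h, dotProduct_add, ih]

private lemma rcac_sum_mulVec {ι m : Type*} (s : Finset ι)
    (f : ι → Matrix m n ℝ) (x : n → ℝ) :
    (∑ i ∈ s, f i) *ᵥ x = ∑ i ∈ s, f i *ᵥ x := by
  classical
  induction s using Finset.induction_on with
  | empty => simp
  | insert _ _ h ih => simp [Finset.sum_insert h, Matrix.add_mulVec, ih]

private lemma rcac_psd_sum {ι m : Type*} [Fintype m] (s : Finset ι)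
    (f : ι → Matrix m m ℝ) (hf : ∀ i ∈ s, (f i).PosSemidef) :
    (∑ i ∈ s, f i).PosSemidef := by
  classical
  induction s using Finset.induction_on with
  | empty => simpa using Matrix.PosSemidef.zero
  | @insert a s h ih =>
    rw [Finset.sum_insert h]
    exact (hf a (Finset.mem_insert_self a s)).add
      (ih fun i hi => hf i (Finset.mem_insert_of_mem hi))

private lemma rcac_inv_step [DecidableEq n] (P Q M : Matrix n n ℝ)
    (hPQ : P * Q = 1) (hQP : Q * P = 1) (hM : IsUnit M.det) :
    P - P * (M - Q) * P + P * (M - Q) * M⁻¹ * (M - Q) * P = M⁻¹ := by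
  have hM1 : M * M⁻¹ = 1 := Matrix.mul_nonsing_inv M hM
  have hM2 : M⁻¹ * M = 1 := Matrix.nonsing_inv_mul M hM
  refine (Matrix.inv_eq_left_inv ?_).symm
  have e1 : ∀ t : Matrix n n ℝ, P * (Q * t) = t := fun t => by rw [← mul_assoc, hPQ, one_mul]
  have e2 : ∀ t : Matrix n n ℝ, Q * (P * t) = t := fun t => by rw [← mul_assoc, hQP, one_mul]
  have e3 : ∀ t : Matrix n n ℝ, M⁻¹ * (M * t) = t := fun t => by rw [← mul_assoc, hM2, one_mul]
  have e4 : ∀ t : Matrix n n ℝ, M * (M⁻¹ * t) = t := fun t => by rw [← mul_assoc, hM1, one_mul]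
  simp only [sub_mul, add_mul, mul_sub, mul_add, mul_assoc, e1, e2, e3, e4, hPQ, hQP, hM1, hM2, mul_one, one_mul]
  abel

set_option maxHeartbeats 1000000 in
theorem rcac_rls_correctness (lu lz lθ nf : ℕ)
    (hlu : 0 < lu) (hlz : 0 < lz) (hlθ : 0 < lθ) (hnf : 0 < nf)
    (Φ : ℕ → Matrix (Fin (nf * lu)) (Fin lθ) ℝ)
    (φ : ℕ → Matrix (Fin lu) (Fin lθ) ℝ)
    (z : ℕ → Fin lz → ℝ)
    (U : ℕ → Fin (nf * lu) → ℝ)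
    (N : Matrix (Fin lz) (Fin (nf * lu)) ℝ)
    (Ru : Matrix (Fin lu) (Fin lu) ℝ) (hRu : Ru.PosSemidef)
    (Rbar : Matrix (Fin lz ⊕ Fin lu) (Fin lz ⊕ Fin lu) ℝ)
    (hRbar : Rbar = Matrix.fromBlocks 1 0 0 Ru)
    (P0 : Matrix (Fin lθ) (Fin lθ) ℝ) (hP0 : P0.PosDef)
    (θ0 : Fin lθ → ℝ)
    (A : ℕ → Matrix (Fin lz ⊕ Fin lu) (Fin lθ) ℝ)
    (hA : ∀ k, A k = Matrix.fromRows (N * Φ k) (φ k))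
    (P : ℕ → Matrix (Fin lθ) (Fin lθ) ℝ)
    (θ : ℕ → Fin lθ → ℝ)
    (Γ : ℕ → Matrix (Fin lz ⊕ Fin lu) (Fin lz ⊕ Fin lu) ℝ)
    (hPinit : P 0 = P0)
    (hθinit : θ 0 = θ0)
    (hΓ : ∀ k, Γ k =
      Rbar - Rbar * A k * ((P k)⁻¹ + (A k)ᵀ * Rbar * A k)⁻¹ * (A k)ᵀ * Rbar)
    (hPrec : ∀ k, P (k + 1) = P k - P k * (A k)ᵀ * Γ k * A k * P k)
    (hθrec : ∀ k, θ (k + 1) = θ k - P (k + 1) *ᵥ ((A k)ᵀ *ᵥ (Rbar *ᵥ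
      Sum.elim (z k - N *ᵥ (U k - Φ k *ᵥ θ k)) (φ k *ᵥ θ k))))
    (zhat : ℕ → (Fin lθ → ℝ) → Fin lz → ℝ)
    (hzhat : ∀ i θh, zhat i θh = z i - N *ᵥ (U i - Φ i *ᵥ θh))
    (J : ℕ → (Fin lθ → ℝ) → ℝ)
    (hJ : ∀ k θh, J k θh =
      (∑ i ∈ Finset.range (k + 1),
        (zhat i θh ⬝ᵥ zhat i θh + (φ i *ᵥ θh) ⬝ᵥ (Ru *ᵥ (φ i *ᵥ θh))))
      + (θh - θ0) ⬝ᵥ (P0⁻¹ *ᵥ (θh - θ0))) :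
    ∀ k, (P k).PosDef ∧
      ∀ θh, J k (θ (k + 1)) ≤ J k θh ∧ (J k θh = J k (θ (k + 1)) → θh = θ (k + 1)) := by
  classical
  -- symmetry facts
  have hRuT : Ruᵀ = Ru := by
    rw [← Matrix.conjTranspose_eq_transpose_of_trivial]; exact hRu.1
  have hRbarT : Rbarᵀ = Rbar := by
    rw [hRbar, Matrix.fromBlocks_transpose]
    simp [hRuT]
  have hP0iT : (P0⁻¹)ᵀ = P0⁻¹ := by
    rw [← Matrix.conjTranspose_eq_transpose_of_trivial]; exact hP0.inv.1
  -- quadratic form of Rbar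
  have hquadR : ∀ (x : Fin lz → ℝ) (y : Fin lu → ℝ),
      Sum.elim x y ⬝ᵥ (Rbar *ᵥ Sum.elim x y) = x ⬝ᵥ x + y ⬝ᵥ (Ru *ᵥ y) := by
    intro x y
    rw [hRbar, Matrix.fromBlocks_mulVec]
    simp [sumElim_dotProduct_sumElim]
  have hRbarPSD : Rbar.PosSemidef := by
    refine Matrix.posSemidef_iff_dotProduct_mulVec.mpr ⟨?_, ?_⟩
    · rw [Matrix.IsHermitian, Matrix.conjTranspose_eq_transpose_of_trivial]; exact hRbarT
    · intro v
      obtain ⟨x, y, rfl⟩ : ∃ x y, v = Sum.elim x y :=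
        ⟨v ∘ Sum.inl, v ∘ Sum.inr, by funext s; cases s <;> rfl⟩
      rw [star_trivial, hquadR]
      have h1 : 0 ≤ x ⬝ᵥ x := Finset.sum_nonneg fun i _ => mul_self_nonneg (x i)
      have h2 := hRu.dotProduct_mulVec_nonneg y
      rw [star_trivial] at h2
      exact add_nonneg h1 h2
  -- abbreviations
  obtain ⟨B, hBdef⟩ : ∃ B : ℕ → Matrix (Fin lθ) (Fin lθ) ℝ,
      B = fun k => (A k)ᵀ * Rbar * A k := ⟨_, rfl⟩
  obtain ⟨H, hHdef⟩ : ∃ H : ℕ → Matrix (Fin lθ) (Fin lθ) ℝ,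
      H = fun k => P0⁻¹ + ∑ i ∈ Finset.range k, B i := ⟨_, rfl⟩
  obtain ⟨d, hddef⟩ : ∃ d : ℕ → (Fin lz ⊕ Fin lu) → ℝ,
      d = fun i => Sum.elim (z i - N *ᵥ U i) 0 := ⟨_, rfl⟩
  obtain ⟨w, hwdef⟩ : ∃ w : ℕ → Fin lθ → ℝ,
      w = fun k => P0⁻¹ *ᵥ θ0 - ∑ i ∈ Finset.range k, (A i)ᵀ *ᵥ (Rbar *ᵥ d i) := ⟨_, rfl⟩
  have hBpsd : ∀ k, (B k).PosSemidef := by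
    intro k
    rw [hBdef]
    have := hRbarPSD.conjTranspose_mul_mul_same (A k)
    rwa [Matrix.conjTranspose_eq_transpose_of_trivial] at this
  have hHpd : ∀ k, (H k).PosDef := by
    intro k
    rw [hHdef]
    exact hP0.inv.add_posSemidef (rcac_psd_sum _ _ fun i _ => hBpsd i)
  have hHdet : ∀ k, IsUnit (H k).det := fun k => (hHpd k).det_pos.ne'.isUnit
  have hP0det : IsUnit P0.det := hP0.det_pos.ne'.isUnit
  have hHsucc : ∀ k, H (k + 1) = H k + B k := by
    intro k
    simp only [hHdef, Finset.sum_range_succ, add_assoc]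
  -- P k = (H k)⁻¹
  have hPH : ∀ k, P k = (H k)⁻¹ := by
    intro k; induction k with
    | zero =>
      rw [hPinit]
      have h0 : H 0 = P0⁻¹ := by simp [hHdef]
      rw [h0, Matrix.nonsing_inv_nonsing_inv _ hP0det]
    | succ k ih =>
      have hPkinv : (P k)⁻¹ = H k := by
        rw [ih, Matrix.nonsing_inv_nonsing_inv _ (hHdet k)]
      have key := rcac_inv_step (P k) (H k) (H (k + 1))
        (by rw [ih]; exact Matrix.nonsing_inv_mul _ (hHdet k))
        (by rw [ih]; exact Matrix.mul_nonsing_inv _ (hHdet k))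
        (hHdet (k + 1))
      have hBk : H (k + 1) - H k = (A k)ᵀ * Rbar * A k := by
        rw [hHsucc k, add_sub_cancel_left, hBdef]
      have hM : H k + (A k)ᵀ * Rbar * A k = H (k + 1) := by
        rw [hHsucc k, hBdef]
      rw [hPrec k, hΓ k, hPkinv, hM]
      refine Eq.trans ?_ key
      rw [hBk]
      simp only [Matrix.mul_sub, Matrix.sub_mul, Matrix.mul_assoc]
      abel
  have hPpd : ∀ k, (P k).PosDef := fun k => by rw [hPH k]; exact (hHpd k).inv
  -- stacked vector identity
  have hvec : ∀ i x, Sum.elim (z i - N *ᵥ (U i - Φ i *ᵥ x)) (φ i *ᵥ x) = A i *ᵥ x + d i := by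
    intro i x
    rw [hA i, Matrix.fromRows_mulVec]
    funext s
    cases s with
    | inl j =>
      simp only [hddef, Sum.elim_inl, Pi.add_apply, Pi.sub_apply, Matrix.mulVec_sub,
        ← Matrix.mulVec_mulVec]
      ring
    | inr j => simp [hddef]
  -- invariant for θ
  have hθw : ∀ k, H k *ᵥ θ k = w k := by
    intro k; induction k with
    | zero => simp [hHdef, hwdef, hθinit]
    | succ k ih =>
      have hθs := hθrec k
      rw [hvec k (θ k)] at hθs
      have hHP : H (k + 1) * P (k + 1) = 1 := by
        rw [hPH (k + 1)]; exact Matrix.mul_nonsing_inv _ (hHdet (k + 1))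
      rw [hθs, Matrix.mulVec_sub, Matrix.mulVec_mulVec, hHP, Matrix.one_mulVec,
        hHsucc k, Matrix.add_mulVec, ih]
      have hexp : (A k)ᵀ *ᵥ (Rbar *ᵥ (A k *ᵥ θ k + d k)) =
          B k *ᵥ θ k + (A k)ᵀ *ᵥ (Rbar *ᵥ d k) := by
        rw [Matrix.mulVec_add, Matrix.mulVec_add]
        congr 1
        simp only [hBdef, Matrix.mulVec_mulVec]
        rw [Matrix.mul_assoc]
      rw [hexp]
      have hws : w (k + 1) = w k - (A k)ᵀ *ᵥ (Rbar *ᵥ d k) := by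
        simp only [hwdef, Finset.sum_range_succ]
        abel
      rw [hws]; abel
  -- canonical quadratic form of J
  have hJquad : ∀ k x, J k x =
      x ⬝ᵥ (H (k + 1) *ᵥ x) - 2 * (x ⬝ᵥ w (k + 1)) +
        ((∑ i ∈ Finset.range (k + 1), d i ⬝ᵥ (Rbar *ᵥ d i)) + θ0 ⬝ᵥ (P0⁻¹ *ᵥ θ0)) := by
    intro k x
    rw [hJ k x]
    have hterm : ∀ i, zhat i x ⬝ᵥ zhat i x + (φ i *ᵥ x) ⬝ᵥ (Ru *ᵥ (φ i *ᵥ x)) =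
        (A i *ᵥ x) ⬝ᵥ (Rbar *ᵥ (A i *ᵥ x)) + 2 * (x ⬝ᵥ ((A i)ᵀ *ᵥ (Rbar *ᵥ d i))) +
          d i ⬝ᵥ (Rbar *ᵥ d i) := by
      intro i
      calc zhat i x ⬝ᵥ zhat i x + (φ i *ᵥ x) ⬝ᵥ (Ru *ᵥ (φ i *ᵥ x))
          = Sum.elim (zhat i x) (φ i *ᵥ x) ⬝ᵥ (Rbar *ᵥ Sum.elim (zhat i x) (φ i *ᵥ x)) :=
            (hquadR _ _).symm
        _ = (A i *ᵥ x + d i) ⬝ᵥ (Rbar *ᵥ (A i *ᵥ x + d i)) := by rw [hzhat i x, hvec i x]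
        _ = (A i *ᵥ x) ⬝ᵥ (Rbar *ᵥ (A i *ᵥ x)) + 2 * ((A i *ᵥ x) ⬝ᵥ (Rbar *ᵥ d i)) +
              d i ⬝ᵥ (Rbar *ᵥ d i) := rcac_quad_exp Rbar hRbarT _ _
        _ = _ := by rw [rcac_swap (A i) x (Rbar *ᵥ d i)]
    have hquad0 : (x - θ0) ⬝ᵥ (P0⁻¹ *ᵥ (x - θ0)) =
        x ⬝ᵥ (P0⁻¹ *ᵥ x) - 2 * (x ⬝ᵥ (P0⁻¹ *ᵥ θ0)) + θ0 ⬝ᵥ (P0⁻¹ *ᵥ θ0) := by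
      rw [sub_eq_add_neg, rcac_quad_exp P0⁻¹ hP0iT x (-θ0)]
      simp only [Matrix.mulVec_neg, dotProduct_neg, neg_dotProduct, neg_neg]
      ring
    rw [Finset.sum_congr rfl fun i _ => hterm i, hquad0,
      Finset.sum_add_distrib, Finset.sum_add_distrib]
    have hsum1 : ∑ i ∈ Finset.range (k + 1), (A i *ᵥ x) ⬝ᵥ (Rbar *ᵥ (A i *ᵥ x)) =
        x ⬝ᵥ ((∑ i ∈ Finset.range (k + 1), B i) *ᵥ x) := by
      rw [rcac_sum_mulVec, rcac_dot_sum]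
      refine Finset.sum_congr rfl fun i _ => ?_
      rw [rcac_swap (A i) x (Rbar *ᵥ (A i *ᵥ x))]
      simp only [hBdef, Matrix.mulVec_mulVec, Matrix.mul_assoc]
    have hsum2 : ∑ i ∈ Finset.range (k + 1), 2 * (x ⬝ᵥ ((A i)ᵀ *ᵥ (Rbar *ᵥ d i))) =
        2 * (x ⬝ᵥ (∑ i ∈ Finset.range (k + 1), (A i)ᵀ *ᵥ (Rbar *ᵥ d i))) := by
      rw [rcac_dot_sum, Finset.mul_sum]
    rw [hsum1, hsum2]
    have hH1 : x ⬝ᵥ (H (k + 1) *ᵥ x) =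
        x ⬝ᵥ (P0⁻¹ *ᵥ x) + x ⬝ᵥ ((∑ i ∈ Finset.range (k + 1), B i) *ᵥ x) := by
      simp [hHdef, Matrix.add_mulVec, dotProduct_add]
    have hw1 : x ⬝ᵥ w (k + 1) =
        x ⬝ᵥ (P0⁻¹ *ᵥ θ0) - x ⬝ᵥ (∑ i ∈ Finset.range (k + 1), (A i)ᵀ *ᵥ (Rbar *ᵥ d i)) := by
      simp [hwdef, dotProduct_sub]
    rw [hH1, hw1]
    ring
  -- conclusion
  intro k
  refine ⟨hPpd k, ?_⟩
  intro θh
  have hHsym : (H (k + 1))ᵀ = H (k + 1) := by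
    rw [← Matrix.conjTranspose_eq_transpose_of_trivial]; exact (hHpd (k + 1)).1
  have hmin : ∀ x, J k x = J k (θ (k + 1)) + (x - θ (k + 1)) ⬝ᵥ (H (k + 1) *ᵥ (x - θ (k + 1))) := by
    intro x
    have hshift := rcac_quad_shift (H (k + 1)) hHsym (θ (k + 1)) (w (k + 1)) x (hθw (k + 1))
    rw [hJquad k x, hJquad k (θ (k + 1))]
    linarith
  constructor
  · rw [hmin θh]
    have hnn := (hHpd (k + 1)).posSemidef.dotProduct_mulVec_nonneg (θh - θ (k + 1))
    rw [star_trivial] at hnn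
    linarith
  · intro heq
    by_contra hne
    have hne' : θh - θ (k + 1) ≠ 0 := sub_ne_zero.mpr hne
    have hpos := (hHpd (k + 1)).dotProduct_mulVec_pos hne'
    rw [star_trivial] at hpos
    rw [hmin θh] at heq
    linarith
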